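/- arXiv:2305.15927 — 4 statements merged into one kernel-verified Lean document; each statement's English description precedes it below -/
import Mathlib

section
/- Let O be a finite index set, and for each i ∈ O let 𝒳_i, 𝒜_i be nonempty standard Borel spaces, ψ_i : 𝒜_i → 𝒳_i measurable, and c_i : 𝒳_i × 𝒳_i → [0,∞] measurable. Let P_d be a probability measure on 𝒳 = Π_{i∈O} 𝒳_i, μ_p a probability measure on 𝒜 = Π_{i∈O} 𝒜_i, P_θ = Ψ#μ_p with Ψ(a) = (ψ_i(a_i))_{i∈O}, and c(x,y) = Σ_{i∈O} c_i(x_i, y_i). Then W_c(P_d, P_θ) ≥ inf { R((φ_i)) : (φ_i)_{i∈O} Markov kernels satisfying the push-forward constraints }, i.e., for every coupling Γ of P_d and P_θ, ∫ c dΓ is at least the infimum of the reconstruction objective over constraint-satisfying backward families. (Inequality (11) in the proof of Theorem 1.) -/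
open MeasureTheory ProbabilityTheory ENNReal

set_option maxHeartbeats 1000000 in
/-- **Inequality (11) in the proof of Theorem 1.** For every coupling `Γ` of the data
distribution `Pd` and the model distribution `Pθ = Ψ#μp`, the transport cost `∫ c dΓ`
is at least the infimum of the reconstruction objective over all families of Markov
kernels (backward maps) satisfying the push-forward constraints. -/
theorem otp_dag_coupling_ge_backward_inf
    {O : Type*} [Fintype O]
    (𝒳 𝒜 : O → Type*)
    [∀ i, MeasurableSpace (𝒳 i)] [∀ i, StandardBorelSpace (𝒳 i)] [∀ i, Nonempty (𝒳 i)]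
    [∀ i, MeasurableSpace (𝒜 i)] [∀ i, StandardBorelSpace (𝒜 i)] [∀ i, Nonempty (𝒜 i)]
    (ψ : ∀ i, 𝒜 i → 𝒳 i) (hψ : ∀ i, Measurable (ψ i))
    (c : ∀ i, 𝒳 i × 𝒳 i → ℝ≥0∞) (hc : ∀ i, Measurable (c i))
    (Pd : Measure (∀ i, 𝒳 i)) [IsProbabilityMeasure Pd]
    (μp : Measure (∀ i, 𝒜 i)) [IsProbabilityMeasure μp]
    (Γ : Measure ((∀ i, 𝒳 i) × (∀ i, 𝒳 i)))
    (hΓfst : Γ.fst = Pd)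
    (hΓsnd : Γ.snd = μp.map (fun a i => ψ i (a i))) :
    (∫⁻ p, ∑ i, c i (p.1 i, p.2 i) ∂Γ) ≥
    sInf { r | ∃ φ : ∀ i, Kernel (𝒳 i) (𝒜 i),
        (∀ i, IsMarkovKernel (φ i)) ∧
        (∀ i, (Pd.map (fun x => x i)).bind (fun xi => φ i xi)
            = μp.map (fun a => a i)) ∧
        r = ∫⁻ x, ∑ i, ∫⁻ a, c i (x i, ψ i a) ∂(φ i (x i)) ∂Pd } := by
  classical
  set Ψ : (∀ i, 𝒜 i) → (∀ i, 𝒳 i) := fun a i => ψ i (a i) with hΨdef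
  have hΨ : Measurable Ψ := measurable_pi_lambda _ fun i => (hψ i).comp (measurable_pi_apply i)
  have hpair : Measurable (fun a => (Ψ a, a)) := hΨ.prodMk measurable_id
  set ν : Measure ((∀ i, 𝒳 i) × (∀ i, 𝒜 i)) := μp.map (fun a => (Ψ a, a)) with hνdef
  haveI : IsProbabilityMeasure ν := Measure.isProbabilityMeasure_map hpair.aemeasurable
  set κ : Kernel (∀ i, 𝒳 i) (∀ i, 𝒜 i) := ν.condKernel with hκdef
  have hνdis : ν.fst ⊗ₘ κ = ν := ν.disintegrate ν.condKernel
  have hνfst : ν.fst = μp.map Ψ := by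
    rw [hνdef, Measure.fst, Measure.map_map measurable_fst hpair]; rfl
  have hνsnd : ν.snd = μp := by
    rw [hνdef, Measure.snd, Measure.map_map measurable_snd hpair]
    exact Measure.map_id
  haveI hΓprob : IsProbabilityMeasure Γ :=
    ⟨by rw [← Measure.fst_univ, hΓfst]; exact measure_univ⟩
  set η : Kernel ((∀ i, 𝒳 i) × (∀ i, 𝒳 i)) (∀ i, 𝒜 i) := κ.comap Prod.snd measurable_snd
    with hηdef
  haveI : IsMarkovKernel η := by rw [hηdef]; infer_instance
  set Γ'' : Measure ((((∀ i, 𝒳 i) × (∀ i, 𝒳 i))) × (∀ i, 𝒜 i)) := Γ ⊗ₘ η with hΓ''def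
  haveI : IsProbabilityMeasure Γ'' := by rw [hΓ''def]; infer_instance
  have hmq : Measurable (fun q : (((∀ i, 𝒳 i) × (∀ i, 𝒳 i))) × (∀ i, 𝒜 i) => (q.1.1, q.2)) :=
    measurable_fst.fst.prodMk measurable_snd
  set Γ' : Measure ((∀ i, 𝒳 i) × (∀ i, 𝒜 i)) := Γ''.map (fun q => (q.1.1, q.2)) with hΓ'def
  haveI : IsProbabilityMeasure Γ' := Measure.isProbabilityMeasure_map hmq.aemeasurable
  have hΓ''fst : Γ''.fst = Γ := Measure.fst_compProd Γ η
  -- the diagonal set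
  have hT : MeasurableSet {q : (∀ i, 𝒳 i) × (∀ i, 𝒜 i) | q.1 = Ψ q.2} := by
    letI := upgradeStandardBorel (∀ i, 𝒳 i)
    exact measurable_fst.stronglyMeasurable.measurableSet_eq_fun
      (hΨ.comp measurable_snd).stronglyMeasurable
  -- key computation: a generic marginal identity
  have hmarg : ∀ s : Set ((∀ i, 𝒳 i) × (∀ i, 𝒜 i)), MeasurableSet s →
      Γ'' ((fun q => (q.1.2, q.2)) ⁻¹' s) = ν s := by
    intro s hs
    have hm2 : Measurable (fun q : (((∀ i, 𝒳 i) × (∀ i, 𝒳 i))) × (∀ i, 𝒜 i) => (q.1.2, q.2)) :=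
      measurable_fst.snd.prodMk measurable_snd
    have hg : Measurable fun y : ∀ i, 𝒳 i => κ y (Prod.mk y ⁻¹' s) :=
      Kernel.measurable_kernel_prodMk_left hs
    rw [hΓ''def, Measure.compProd_apply (hm2 hs)]
    have h1 : (fun p : (∀ i, 𝒳 i) × (∀ i, 𝒳 i) =>
        η p (Prod.mk p ⁻¹' ((fun q : (((∀ i, 𝒳 i) × (∀ i, 𝒳 i))) × (∀ i, 𝒜 i) =>
          (q.1.2, q.2)) ⁻¹' s)))
        = fun p => κ p.2 (Prod.mk p.2 ⁻¹' s) := by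
      funext p; rw [hηdef, Kernel.comap_apply]; rfl
    rw [h1]
    have h2 : ∫⁻ p : (∀ i, 𝒳 i) × (∀ i, 𝒳 i), κ p.2 (Prod.mk p.2 ⁻¹' s) ∂Γ
        = ∫⁻ y, κ y (Prod.mk y ⁻¹' s) ∂(Γ.snd) := by
      rw [Measure.snd, lintegral_map hg measurable_snd]
    rw [h2, hΓsnd, ← hνfst, ← Measure.compProd_apply hs, hνdis]
  have hae : ∀ᵐ q ∂Γ'', q.1.2 = Ψ q.2 := by
    rw [ae_iff]
    have : {q : (((∀ i, 𝒳 i) × (∀ i, 𝒳 i))) × (∀ i, 𝒜 i) | ¬ q.1.2 = Ψ q.2}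
        = (fun q : (((∀ i, 𝒳 i) × (∀ i, 𝒳 i))) × (∀ i, 𝒜 i) => (q.1.2, q.2)) ⁻¹'
          {q : (∀ i, 𝒳 i) × (∀ i, 𝒜 i) | q.1 = Ψ q.2}ᶜ := rfl
    rw [this, hmarg _ hT.compl, hνdef, Measure.map_apply hpair hT.compl]
    have : (fun a => (Ψ a, a)) ⁻¹' {q : (∀ i, 𝒳 i) × (∀ i, 𝒜 i) | q.1 = Ψ q.2}ᶜ = ∅ := by
      ext a; simp
    rw [this]; exact measure_empty
  -- marginals of Γ'
  have hΓ'fst : Γ'.fst = Pd := by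
    have h4 : Γ'.fst = (Γ''.fst).fst := by
      rw [hΓ'def, Measure.fst, Measure.fst, Measure.fst, Measure.map_map measurable_fst hmq,
        Measure.map_map measurable_fst measurable_fst]
      rfl
    rw [h4, hΓ''fst, hΓfst]
  have hΓ'snd : Γ'.snd = μp := by
    have h3 : Γ''.map (fun q : (((∀ i, 𝒳 i) × (∀ i, 𝒳 i))) × (∀ i, 𝒜 i) => (q.1.2, q.2)) = ν := by
      ext s hs
      rw [Measure.map_apply (measurable_fst.snd.prodMk measurable_snd) hs]
      exact hmarg s hs
    have h4 : Γ'.snd = (Γ''.map (fun q : (((∀ i, 𝒳 i) × (∀ i, 𝒳 i))) × (∀ i, 𝒜 i) =>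
        (q.1.2, q.2))).snd := by
      rw [hΓ'def, Measure.snd, Measure.snd, Measure.map_map measurable_snd hmq,
        Measure.map_map measurable_snd (measurable_fst.snd.prodMk measurable_snd)]
      rfl
    rw [h4, h3, hνsnd]
  -- the per-coordinate measures and kernels
  have hmi : ∀ i, Measurable (fun q : (∀ j, 𝒳 j) × (∀ j, 𝒜 j) => (q.1 i, q.2 i)) :=
    fun i => ((measurable_pi_apply i).comp measurable_fst).prodMk
      ((measurable_pi_apply i).comp measurable_snd)
  set ρ : ∀ i, Measure (𝒳 i × 𝒜 i) := fun i => Γ'.map (fun q => (q.1 i, q.2 i)) with hρdef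
  haveI : ∀ i, IsProbabilityMeasure (ρ i) := fun i =>
    Measure.isProbabilityMeasure_map (hmi i).aemeasurable
  set φ : ∀ i, Kernel (𝒳 i) (𝒜 i) := fun i => (ρ i).condKernel with hφdef
  have hρfst : ∀ i, (ρ i).fst = Pd.map (fun x => x i) := by
    intro i
    have h4 : (ρ i).fst = (Γ'.fst).map (fun x => x i) := by
      rw [hρdef, Measure.fst, Measure.fst, Measure.map_map measurable_fst (hmi i),
        Measure.map_map (measurable_pi_apply i) measurable_fst]
      rfl
    rw [h4, hΓ'fst]
  have hρsnd : ∀ i, (ρ i).snd = μp.map (fun a => a i) := by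
    intro i
    have h4 : (ρ i).snd = (Γ'.snd).map (fun a => a i) := by
      rw [hρdef, Measure.snd, Measure.snd, Measure.map_map measurable_snd (hmi i),
        Measure.map_map (measurable_pi_apply i) measurable_snd]
      rfl
    rw [h4, hΓ'snd]
  have hρdis : ∀ i, (ρ i).fst ⊗ₘ φ i = ρ i := fun i => (ρ i).disintegrate (ρ i).condKernel
  -- the push-forward constraint
  have hconstraint : ∀ i, (Pd.map (fun x => x i)).bind (fun xi => φ i xi)
      = μp.map (fun a => a i) := by
    intro i
    rw [← hρfst i, ← hρsnd i]
    ext s hs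
    rw [Measure.bind_apply hs (φ i).measurable.aemeasurable, Measure.snd_apply hs]
    conv_rhs => rw [← hρdis i]
    rw [Measure.compProd_apply (measurable_snd hs)]
    rfl
  -- the value computation
  refine le_trans (sInf_le ?_) (le_refl _)
  refine ⟨φ, fun i => by rw [hφdef]; infer_instance, hconstraint, ?_⟩
  -- measurable cost pieces
  have hci : ∀ i, Measurable (fun q : 𝒳 i × 𝒜 i => c i (q.1, ψ i q.2)) := fun i =>
    (hc i).comp (measurable_fst.prodMk ((hψ i).comp measurable_snd))
  have hFi : ∀ i, Measurable (fun t : 𝒳 i => ∫⁻ a, c i (t, ψ i a) ∂(φ i t)) := fun i =>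
    Measurable.lintegral_kernel_prod_right (hci i)
  symm
  calc ∫⁻ x, ∑ i, ∫⁻ a, c i (x i, ψ i a) ∂(φ i (x i)) ∂Pd
      = ∑ i, ∫⁻ x, ∫⁻ a, c i (x i, ψ i a) ∂(φ i (x i)) ∂Pd := by
        rw [lintegral_finset_sum]
        exact fun i _ => (hFi i).comp (measurable_pi_apply i)
    _ = ∑ i, ∫⁻ q, c i (q.1 i, ψ i (q.2 i)) ∂Γ' := by
        refine Finset.sum_congr rfl fun i _ => ?_
        rw [← lintegral_map (hFi i) (measurable_pi_apply i), ← hρfst i,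
          ← Measure.lintegral_compProd (hci i), hρdis i, hρdef,
          lintegral_map (hci i) (hmi i)]
    _ = ∫⁻ q, ∑ i, c i (q.1 i, ψ i (q.2 i)) ∂Γ' := by
        rw [lintegral_finset_sum]
        exact fun i _ => (hci i).comp (hmi i)
    _ = ∫⁻ w, ∑ i, c i (w.1.1 i, ψ i (w.2 i)) ∂Γ'' := by
        rw [hΓ'def, lintegral_map _ hmq]
        exact Finset.measurable_sum _ fun i _ => (hci i).comp (hmi i)
    _ = ∫⁻ w, ∑ i, c i (w.1.1 i, w.1.2 i) ∂Γ'' := by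
        refine lintegral_congr_ae ?_
        filter_upwards [hae] with w hw
        rw [hw]
    _ = ∫⁻ p, ∑ i, c i (p.1 i, p.2 i) ∂Γ := by
        rw [← hΓ''fst, Measure.fst, lintegral_map _ measurable_fst]
        exact Finset.measurable_sum _ fun i _ => (hc i).comp
          (((measurable_pi_apply i).comp measurable_fst).prodMk
            ((measurable_pi_apply i).comp measurable_snd))
end

section
/- Let 𝒳 and 𝒵 be nonempty standard Borel spaces, μ a probability measure on 𝒳 (the data distribution), ν a probability measure on 𝒵 (the prior over the latent variable), ψ : 𝒵 → 𝒳 a measurable decoder, and c : 𝒳 × 𝒳 → [0,∞] a measurable cost. Then W_c(μ, ψ#ν) = inf over Markov kernels φ from 𝒳 to 𝒵 with μ.bind φ = ν of ∫_𝒳 ∫_𝒵 c(x, ψ(z)) dφ(x)(z) dμ(x). (The two-node special case of Theorem 1, recovering the Wasserstein auto-encoder objective, which the paper's framework generalizes.) -/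
open MeasureTheory ProbabilityTheory ENNReal

/-- The Kantorovich optimal transport cost between two measures on the same space. -/
noncomputable def kantorovich {𝒴 : Type*} [MeasurableSpace 𝒴]
    (μ ν : Measure 𝒴) (C : 𝒴 × 𝒴 → ℝ≥0∞) : ℝ≥0∞ :=
  sInf { r | ∃ Γ : Measure (𝒴 × 𝒴), Γ.fst = μ ∧ Γ.snd = ν ∧ r = ∫⁻ p, C p ∂Γ }

lemma measSet_eq {α β : Type*} [MeasurableSpace α] [StandardBorelSpace α]
    [MeasurableSpace β] {f g : β → α} (hf : Measurable f) (hg : Measurable g) :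
    MeasurableSet {x | f x = g x} := by
  letI := upgradeStandardBorel α
  exact hf.stronglyMeasurable.measurableSet_eq_fun hg.stronglyMeasurable

lemma snd_compProd' {α β : Type*} [MeasurableSpace α] [MeasurableSpace β]
    (μ : Measure α) [SFinite μ] (κ : Kernel α β) [IsSFiniteKernel κ] :
    (μ ⊗ₘ κ).snd = μ.bind (fun x => κ x) := by
  ext s hs
  rw [Measure.snd_apply hs, Measure.compProd_apply (measurable_snd hs),
    Measure.bind_apply hs (Kernel.measurable κ).aemeasurable]
  rfl

/-- **Two-node special case of Theorem 1 (the Wasserstein auto-encoder objective).**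
For data distribution `μ` on `𝒳`, prior `ν` on the latent space `𝒵` and a measurable
decoder `ψ : 𝒵 → 𝒳`, the Kantorovich transport cost `W_c(μ, ψ#ν)` equals the infimum
of the reconstruction objective over Markov kernels (stochastic encoders)
`φ : 𝒳 ⇝ 𝒵` satisfying the push-forward constraint `φ#μ = ν`. -/
theorem otp_dag_wae
    {𝒳 𝒵 : Type*}
    [MeasurableSpace 𝒳] [StandardBorelSpace 𝒳] [Nonempty 𝒳]
    [MeasurableSpace 𝒵] [StandardBorelSpace 𝒵] [Nonempty 𝒵]
    (μ : Measure 𝒳) [IsProbabilityMeasure μ]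
    (ν : Measure 𝒵) [IsProbabilityMeasure ν]
    (ψ : 𝒵 → 𝒳) (hψ : Measurable ψ)
    (c : 𝒳 × 𝒳 → ℝ≥0∞) (hc : Measurable c) :
    kantorovich μ (ν.map ψ) c =
    sInf { r | ∃ φ : Kernel 𝒳 𝒵, IsMarkovKernel φ ∧
        μ.bind (fun x => φ x) = ν ∧
        r = ∫⁻ x, ∫⁻ z, c (x, ψ z) ∂(φ x) ∂μ } := by
  unfold kantorovich
  congr 1
  ext r
  simp only [Set.mem_setOf_eq]
  constructor
  · rintro ⟨Γ, hΓ1, hΓ2, rfl⟩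
    haveI : IsProbabilityMeasure Γ := by
      constructor
      rw [← Set.preimage_univ (f := Prod.fst), ← Measure.fst_apply MeasurableSet.univ, hΓ1]
      exact measure_univ
    set η : Measure (𝒳 × 𝒵) := ν.map (fun z => (ψ z, z)) with hη_def
    have hηmeas : Measurable (fun z : 𝒵 => (ψ z, z)) := hψ.prodMk measurable_id
    haveI : IsProbabilityMeasure η := Measure.isProbabilityMeasure_map hηmeas.aemeasurable
    have hηfst : η.fst = ν.map ψ := by
      rw [hη_def, Measure.fst, Measure.map_map measurable_fst hηmeas]
      rfl
    have hηsnd : η.snd = ν := by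
      rw [hη_def, Measure.snd, Measure.map_map measurable_snd hηmeas]
      have h : (Prod.snd ∘ fun z : 𝒵 => (ψ z, z)) = id := rfl
      rw [h, Measure.map_id]
    set κ := η.condKernel with hκ_def
    have hηd : (ν.map ψ) ⊗ₘ κ = η := by
      rw [← hηfst]; exact η.disintegrate η.condKernel
    -- a.e. fact
    have hae0 : ∀ᵐ p ∂η, ψ p.2 = p.1 := by
      rw [hη_def]
      exact (ae_map_iff hηmeas.aemeasurable
        (measSet_eq (hψ.comp measurable_snd) measurable_fst)).mpr
        (Filter.Eventually.of_forall fun z => rfl)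
    have hae1 : ∀ᵐ y ∂(ν.map ψ), ∀ᵐ z ∂(κ y), ψ z = y := by
      apply Measure.ae_ae_of_ae_compProd (p := fun p => ψ p.2 = p.1)
      rw [hηd]; exact hae0
    set ρ := Γ.condKernel with hρ_def
    have hΓd : μ ⊗ₘ ρ = Γ := by rw [← hΓ1]; exact Γ.disintegrate Γ.condKernel
    have hbindρ : μ.bind (fun x => ρ x) = ν.map ψ := by
      rw [← snd_compProd' μ ρ, hΓd, hΓ2]
    refine ⟨κ ∘ₖ ρ, inferInstance, ?_, ?_⟩
    · have : μ.bind (fun x => (κ ∘ₖ ρ) x) = (μ.bind (fun x => ρ x)).bind (fun y => κ y) := by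
        simp_rw [Kernel.comp_apply]
        rw [Measure.bind_bind (Kernel.measurable ρ).aemeasurable (Kernel.measurable κ).aemeasurable]
      rw [this, hbindρ, ← snd_compProd' (ν.map ψ) κ, hηd, hηsnd]
    · -- cost identity
      have hmeas_inner : Measurable (fun p : 𝒳 × 𝒳 => ∫⁻ z, c (p.1, ψ z) ∂(κ p.2)) := by
        have h1 : Measurable (fun q : (𝒳 × 𝒳) × 𝒵 => c (q.1.1, ψ q.2)) :=
          hc.comp ((measurable_fst.fst).prodMk (hψ.comp measurable_snd))
        exact h1.lintegral_kernel_prod_right' (κ := κ.comap Prod.snd measurable_snd)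
      calc ∫⁻ p, c p ∂Γ
          = ∫⁻ p, c p ∂(μ ⊗ₘ ρ) := by rw [hΓd]
        _ = ∫⁻ p, ∫⁻ z, c (p.1, ψ z) ∂(κ p.2) ∂(μ ⊗ₘ ρ) := by
            apply lintegral_congr_ae
            have h2 : ∀ᵐ p ∂(μ ⊗ₘ ρ), ∀ᵐ z ∂(κ p.2), ψ z = p.2 := by
              have hsnd : (μ ⊗ₘ ρ).snd = ν.map ψ := by rw [hΓd, hΓ2]
              have := MeasureTheory.ae_of_ae_map (f := Prod.snd)
                measurable_snd.aemeasurable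
                (p := fun y => ∀ᵐ z ∂(κ y), ψ z = y) (by rw [show (μ ⊗ₘ ρ).map Prod.snd = (μ ⊗ₘ ρ).snd from rfl, hsnd]; exact hae1)
              exact this
            filter_upwards [h2] with p hp
            have : ∫⁻ z, c (p.1, ψ z) ∂(κ p.2) = ∫⁻ _, c p ∂(κ p.2) := by
              apply lintegral_congr_ae
              filter_upwards [hp] with z hz
              rw [hz]
            rw [this, lintegral_const, measure_univ, mul_one]
        _ = ∫⁻ x, ∫⁻ y, ∫⁻ z, c (x, ψ z) ∂(κ y) ∂(ρ x) ∂μ :=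
            Measure.lintegral_compProd hmeas_inner
        _ = ∫⁻ x, ∫⁻ z, c (x, ψ z) ∂((κ ∘ₖ ρ) x) ∂μ := by
            apply lintegral_congr fun x => ?_
            rw [Kernel.comp_apply,
              Measure.lintegral_bind (Kernel.measurable κ).aemeasurable
                (show Measurable (fun z : 𝒵 => c (x, ψ z)) from
                  hc.comp (measurable_const.prodMk hψ)).aemeasurable]
  · rintro ⟨φ, hφ, hbind, rfl⟩
    haveI := hφ
    set f : 𝒳 × 𝒵 → 𝒳 × 𝒳 := fun p => (p.1, ψ p.2) with hf_def
    have hfm : Measurable f := measurable_fst.prodMk (hψ.comp measurable_snd)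
    refine ⟨(μ ⊗ₘ φ).map f, ?_, ?_, ?_⟩
    · rw [Measure.fst, Measure.map_map measurable_fst hfm]
      have : (Prod.fst ∘ f) = (Prod.fst : 𝒳 × 𝒵 → 𝒳) := rfl
      rw [this, ← Measure.fst, Measure.fst_compProd]
    · rw [Measure.snd, Measure.map_map measurable_snd hfm]
      have : (Prod.snd ∘ f) = ψ ∘ (Prod.snd : 𝒳 × 𝒵 → 𝒵) := rfl
      rw [this, ← Measure.map_map hψ measurable_snd, ← Measure.snd, snd_compProd', hbind]
    · rw [lintegral_map hc hfm,
        Measure.lintegral_compProd (show Measurable (fun p : 𝒳 × 𝒵 => c (f p)) from hc.comp hfm)]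
end

section
/- Let 𝒳 and 𝒜 be nonempty standard Borel spaces, μ a probability measure on 𝒳, ν a probability measure on 𝒜, ψ : 𝒜 → 𝒳 measurable, and c : 𝒳 × 𝒳 → [0,∞] measurable. Then for every coupling Γ of μ and ψ#ν there exists a coupling γ of μ and ν such that ∫_{𝒳×𝒳} c(x, y) dΓ(x, y) = ∫_{𝒳×𝒜} c(x, ψ(a)) dγ(x, a). (The gluing step in the proof of Theorem 1: gluing Γ with the deterministic coupling (id, ψ)#ν along the common marginal ψ#ν.) -/
open MeasureTheory ProbabilityTheory ENNReal

/-- **The gluing step in the proof of Theorem 1.** For every coupling `Γ` of `μ` and the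
pushforward `ψ#ν`, gluing `Γ` with the deterministic coupling `(id, ψ)#ν` along the
common marginal `ψ#ν` yields a coupling `γ` of `μ` and `ν` whose transported cost
equals the cost of `Γ`. -/
theorem otp_dag_gluing
    {𝒳 𝒜 : Type*}
    [MeasurableSpace 𝒳] [StandardBorelSpace 𝒳] [Nonempty 𝒳]
    [MeasurableSpace 𝒜] [StandardBorelSpace 𝒜] [Nonempty 𝒜]
    (μ : Measure 𝒳) [IsProbabilityMeasure μ]
    (ν : Measure 𝒜) [IsProbabilityMeasure ν]
    (ψ : 𝒜 → 𝒳) (hψ : Measurable ψ)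
    (c : 𝒳 × 𝒳 → ℝ≥0∞) (hc : Measurable c)
    (Γ : Measure (𝒳 × 𝒳)) (hΓfst : Γ.fst = μ) (hΓsnd : Γ.snd = ν.map ψ) :
    ∃ γ : Measure (𝒳 × 𝒜), γ.fst = μ ∧ γ.snd = ν ∧
      (∫⁻ p, c p ∂Γ) = ∫⁻ p, c (p.1, ψ p.2) ∂γ := by
  haveI : IsProbabilityMeasure Γ := by
    constructor
    have h := congrArg (fun m : Measure 𝒳 => m Set.univ) hΓfst
    simpa [Measure.fst_apply MeasurableSet.univ] using h
  set ρ : Measure (𝒳 × 𝒳) := Γ.map Prod.swap with hρdef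
  haveI : IsProbabilityMeasure ρ := Measure.isProbabilityMeasure_map measurable_swap.aemeasurable
  have hρfst : ρ.fst = ν.map ψ := by rw [hρdef, Measure.fst_map_swap, hΓsnd]
  have hρsnd : ρ.snd = μ := by rw [hρdef, Measure.snd_map_swap, hΓfst]
  have hdis : ρ.fst ⊗ₘ ρ.condKernel = ρ := ρ.disintegrate ρ.condKernel
  set κ : Kernel 𝒜 𝒳 := ρ.condKernel.comap ψ hψ with hκdef
  haveI : IsMarkovKernel κ := by
    rw [hκdef]; exact Kernel.IsMarkovKernel.comap _ hψ
  refine ⟨(ν ⊗ₘ κ).map Prod.swap, ?_, ?_, ?_⟩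
  · -- first marginal is μ
    rw [Measure.fst_map_swap]
    ext s hs
    rw [Measure.snd_apply hs, Measure.compProd_apply (measurable_snd hs)]
    have : ∀ a : 𝒜, Prod.mk a ⁻¹' (Prod.snd ⁻¹' s : Set (𝒜 × 𝒳)) = s := fun a => rfl
    simp_rw [this, hκdef, Kernel.comap_apply]
    rw [← lintegral_map (Kernel.measurable_coe _ hs) hψ, ← hρfst, ← hρsnd,
      Measure.snd_apply hs]
    conv_rhs => rw [← hdis]
    rw [Measure.compProd_apply (measurable_snd hs)]
    rfl
  · rw [Measure.snd_map_swap, Measure.fst_compProd]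
  · -- cost equality
    have hswap : (∫⁻ p, c (p.1, ψ p.2) ∂((ν ⊗ₘ κ).map Prod.swap))
        = ∫⁻ q : 𝒜 × 𝒳, c (q.2, ψ q.1) ∂(ν ⊗ₘ κ) := by
      rw [lintegral_map (f := fun p : 𝒳 × 𝒜 => c (p.1, ψ p.2)) (by fun_prop) measurable_swap]
      rfl
    rw [hswap, Measure.lintegral_compProd (f := fun q : 𝒜 × 𝒳 => c (q.2, ψ q.1)) (by fun_prop)]
    simp_rw [hκdef, Kernel.comap_apply]
    have hg : Measurable fun y : 𝒳 => ∫⁻ x, c (x, y) ∂ρ.condKernel y :=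
      Measurable.lintegral_kernel_prod_right'
        (f := fun p : 𝒳 × 𝒳 => c (p.2, p.1)) (by fun_prop)
    rw [← lintegral_map hg hψ, ← hρfst]
    have : (∫⁻ y, ∫⁻ x, c (x, y) ∂ρ.condKernel y ∂ρ.fst)
        = ∫⁻ p : 𝒳 × 𝒳, c (p.2, p.1) ∂(ρ.fst ⊗ₘ ρ.condKernel) := by
      rw [Measure.lintegral_compProd (f := fun p : 𝒳 × 𝒳 => c (p.2, p.1)) (by fun_prop)]
    rw [this, hdis, hρdef,
      lintegral_map (f := fun p : 𝒳 × 𝒳 => c (p.2, p.1)) (by fun_prop) measurable_swap]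
    rfl
end

section
/- Let O be a finite index set, and for each i ∈ O let 𝒳_i, 𝒜_i be nonempty standard Borel spaces, ψ_i : 𝒜_i → 𝒳_i measurable, and c_i : 𝒳_i × 𝒳_i → [0,∞] measurable costs with c_i(x, x) = 0 for all x ∈ 𝒳_i. Let P_d be a probability measure on 𝒳 = Π_{i∈O} 𝒳_i and μ_p a probability measure on 𝒜 = Π_{i∈O} 𝒜_i, and suppose the model is well specified: the pushforward of μ_p under Ψ(a) = (ψ_i(a_i))_{i∈O} equals P_d. Then there exists a family (φ*_i)_{i∈O} of Markov kernels φ*_i from 𝒳_i to 𝒜_i such that (a) for every i ∈ O the push-forward constraint holds (binding the i-th marginal of P_d with φ*_i equals the i-th marginal of μ_p), and (b) the reconstruction objective R((φ*_i)) = ∫_𝒳 Σ_{i∈O} ∫_{𝒜_i} c_i(x_i, ψ_i(a_i)) dφ*_i(x_i)(a_i) dP_d(x) equals 0; consequently W_c(P_d, Ψ#μ_p) = 0 with c(x,y) = Σ_{i∈O} c_i(x_i, y_i), and the infimum in the OTP-DAG objective is attained at value 0. (Existence part of Theorem 2 of the paper.) -/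
open MeasureTheory ProbabilityTheory ENNReal

lemma snd_compProd_eq_bind {α β : Type*} [MeasurableSpace α] [MeasurableSpace β]
    (μ : Measure α) [SFinite μ] (κ : Kernel α β) [IsSFiniteKernel κ] :
    (μ ⊗ₘ κ).snd = μ.bind (fun a => κ a) := by
  ext s hs
  rw [Measure.snd_apply hs, Measure.bind_apply hs (Kernel.measurable κ).aemeasurable,
    Measure.compProd_apply (measurable_snd hs)]
  rfl

/-- **Existence part of Theorem 2 of the paper.** If the model is well-specified
(`Ψ#μp = Pd`) and each cost vanishes on the diagonal, then there exists a family of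
Markov kernels (backward maps) satisfying all the push-forward constraints whose
reconstruction objective is `0`; consequently the Kantorovich cost `W_c(Pd, Ψ#μp)` is
`0` and the infimum in the OTP-DAG objective is attained at value `0`. -/
theorem otp_dag_theorem2_existence
    {O : Type*} [Fintype O]
    (𝒳 𝒜 : O → Type*)
    [∀ i, MeasurableSpace (𝒳 i)] [∀ i, StandardBorelSpace (𝒳 i)] [∀ i, Nonempty (𝒳 i)]
    [∀ i, MeasurableSpace (𝒜 i)] [∀ i, StandardBorelSpace (𝒜 i)] [∀ i, Nonempty (𝒜 i)]
    (ψ : ∀ i, 𝒜 i → 𝒳 i) (hψ : ∀ i, Measurable (ψ i))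
    (c : ∀ i, 𝒳 i × 𝒳 i → ℝ≥0∞) (hc : ∀ i, Measurable (c i))
    (hcdiag : ∀ i, ∀ x : 𝒳 i, c i (x, x) = 0)
    (Pd : Measure (∀ i, 𝒳 i)) [IsProbabilityMeasure Pd]
    (μp : Measure (∀ i, 𝒜 i)) [IsProbabilityMeasure μp]
    (hspec : μp.map (fun a i => ψ i (a i)) = Pd) :
    (∃ φ : ∀ i, Kernel (𝒳 i) (𝒜 i),
        (∀ i, IsMarkovKernel (φ i)) ∧
        (∀ i, (Pd.map (fun x => x i)).bind (fun xi => φ i xi)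
            = μp.map (fun a => a i)) ∧
        (∫⁻ x, ∑ i, ∫⁻ a, c i (x i, ψ i a) ∂(φ i (x i)) ∂Pd) = 0) ∧
    kantorovich Pd (μp.map (fun a i => ψ i (a i)))
      (fun p => ∑ i, c i (p.1 i, p.2 i)) = 0 ∧
    sInf { r | ∃ φ : ∀ i, Kernel (𝒳 i) (𝒜 i),
        (∀ i, IsMarkovKernel (φ i)) ∧
        (∀ i, (Pd.map (fun x => x i)).bind (fun xi => φ i xi)
            = μp.map (fun a => a i)) ∧
        r = ∫⁻ x, ∑ i, ∫⁻ a, c i (x i, ψ i a) ∂(φ i (x i)) ∂Pd } = 0 := by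
  classical
  -- measurability of the full forward map
  have hΨ : Measurable (fun a : ∀ i, 𝒜 i => fun i => ψ i (a i)) :=
    measurable_pi_lambda _ (fun i => (hψ i).comp (measurable_pi_apply i))
  -- joint law of (ψ i (a i), a i)
  set ρ : ∀ i, Measure (𝒳 i × 𝒜 i) :=
    fun i => μp.map (fun a => (ψ i (a i), a i)) with hρ
  have hρmeas : ∀ i, Measurable (fun a : ∀ j, 𝒜 j => (ψ i (a i), a i)) :=
    fun i => ((hψ i).comp (measurable_pi_apply i)).prodMk (measurable_pi_apply i)
  have hρprob : ∀ i, IsProbabilityMeasure (ρ i) :=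
    fun i => Measure.isProbabilityMeasure_map (hρmeas i).aemeasurable
  -- marginals of ρ i
  have hfst : ∀ i, (ρ i).fst = Pd.map (fun x => x i) := by
    intro i
    rw [hρ, Measure.fst_map_prodMk (measurable_pi_apply i), ← hspec,
      Measure.map_map (measurable_pi_apply i) hΨ]
    rfl
  have hsnd : ∀ i, (ρ i).snd = μp.map (fun a => a i) := by
    intro i
    rw [hρ]
    have hmX : Measurable (fun a : ∀ j, 𝒜 j => ψ i (a i)) :=
      (hψ i).comp (measurable_pi_apply i)
    exact Measure.snd_map_prodMk (Y := fun a => a i) hmX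
  -- the backward maps: conditional kernels
  set φ : ∀ i, Kernel (𝒳 i) (𝒜 i) := fun i => (ρ i).condKernel with hφ
  have hMarkov : ∀ i, IsMarkovKernel (φ i) := by
    intro i
    have := hρprob i
    exact inferInstanceAs (IsMarkovKernel (ρ i).condKernel)
  have hbind : ∀ i, (Pd.map (fun x => x i)).bind (fun xi => φ i xi)
      = μp.map (fun a => a i) := by
    intro i
    have := hρprob i
    rw [← hfst i, ← hsnd i, ← snd_compProd_eq_bind, Measure.disintegrate]
  -- the reconstruction objective vanishes
  have hterm : ∀ i, (∫⁻ x, ∫⁻ a, c i (x i, ψ i a) ∂(φ i (x i)) ∂Pd) = 0 := by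
    intro i
    have := hρprob i
    have hfmeas : Measurable (fun p : 𝒳 i × 𝒜 i => c i (p.1, ψ i p.2)) :=
      (hc i).comp (measurable_fst.prodMk ((hψ i).comp measurable_snd))
    have hint : Measurable (fun t : 𝒳 i => ∫⁻ a, c i (t, ψ i a) ∂(φ i t)) :=
      hfmeas.lintegral_kernel_prod_right'
    calc (∫⁻ x, ∫⁻ a, c i (x i, ψ i a) ∂(φ i (x i)) ∂Pd)
        = ∫⁻ t, ∫⁻ a, c i (t, ψ i a) ∂(φ i t) ∂(Pd.map (fun x => x i)) := by
          rw [lintegral_map hint (measurable_pi_apply i)]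
      _ = ∫⁻ p, c i (p.1, ψ i p.2) ∂((ρ i).fst ⊗ₘ (ρ i).condKernel) := by
          rw [hfst i, Measure.lintegral_compProd hfmeas]
      _ = ∫⁻ p, c i (p.1, ψ i p.2) ∂(ρ i) := by
          rw [Measure.disintegrate]
      _ = ∫⁻ a, c i (ψ i (a i), ψ i (a i)) ∂μp := by
          rw [hρ, lintegral_map hfmeas (hρmeas i)]
      _ = 0 := by simp [hcdiag]
  have hobj : (∫⁻ x, ∑ i, ∫⁻ a, c i (x i, ψ i a) ∂(φ i (x i)) ∂Pd) = 0 := by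
    have hmeas : ∀ i : O, Measurable
        (fun x : ∀ j, 𝒳 j => ∫⁻ a, c i (x i, ψ i a) ∂(φ i (x i))) := by
      intro i
      have hfmeas : Measurable (fun p : 𝒳 i × 𝒜 i => c i (p.1, ψ i p.2)) :=
        (hc i).comp (measurable_fst.prodMk ((hψ i).comp measurable_snd))
      exact hfmeas.lintegral_kernel_prod_right'.comp (measurable_pi_apply i)
    rw [lintegral_finset_sum _ (fun i _ => hmeas i)]
    exact Finset.sum_eq_zero (fun i _ => hterm i)
  refine ⟨⟨φ, hMarkov, hbind, hobj⟩, ?_, ?_⟩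
  · -- Kantorovich cost is zero, witnessed by the diagonal coupling
    rw [hspec]
    refine le_antisymm (sInf_le ?_) zero_le
    refine ⟨Pd.map (fun x => (x, x)), ?_, ?_, ?_⟩
    · rw [Measure.fst_map_prodMk (X := fun x => x) (Y := fun x => x) measurable_id,
        Measure.map_id']
    · rw [Measure.snd_map_prodMk (X := fun x => x) (Y := fun x => x) measurable_id,
        Measure.map_id']
    · have hCmeas : Measurable
          (fun p : (∀ i, 𝒳 i) × (∀ i, 𝒳 i) => ∑ i, c i (p.1 i, p.2 i)) := by
        refine Finset.measurable_sum _ (fun i _ => ?_)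
        exact (hc i).comp (((measurable_pi_apply i).comp measurable_fst).prodMk
          ((measurable_pi_apply i).comp measurable_snd))
      have hdiag : Measurable (fun x : ∀ i, 𝒳 i => (x, x)) :=
        measurable_id.prodMk measurable_id
      rw [lintegral_map hCmeas hdiag]
      simp [hcdiag]
  · refine le_antisymm (sInf_le ?_) zero_le
    exact ⟨φ, hMarkov, hbind, hobj.symm⟩
end
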